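/- Let f = D_{x,y} : [a,b] → X be the Dirichlet-type function taking value x at rationals and y at irrationals in [a,b], where d(x,y) > 0. Then for every ε with 0 < ε < d(x,y)/2, V_ε(f,[a,b]) = ∞, and for every ε ≥ d(x,y), V_ε(f,[a,b]) = 0. -/

import Mathlib

open Filter Set

noncomputable def jordanVar {X : Type*} [PseudoMetricSpace X] (f : ℝ → X) (S : Set ℝ) : ENNReal :=
  ⨆ (n : ℕ) (t : Fin (n+1) → ℝ) (_ : Monotone t) (_ : ∀ i, t i ∈ S),
    ∑ i : Fin n, edist (f (t i.succ)) (f (t i.castSucc))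

noncomputable def appVar {X : Type*} [PseudoMetricSpace X] (ε : ℝ) (f : ℝ → X) (S : Set ℝ) : ENNReal :=
  ⨅ (g : ℝ → X) (_ : jordanVar g S < ⊤) (_ : ∀ t ∈ S, dist (f t) (g t) ≤ ε), jordanVar g S

lemma exists_alt (a b : ℝ) (hab : a < b) (n : ℕ) :
    ∃ t : Fin (n+1) → ℝ, StrictMono t ∧ (∀ i, t i ∈ Icc a b) ∧
      ∀ i : Fin (n+1), (Even (i : ℕ) → ¬ Irrational (t i)) ∧
        (¬ Even (i : ℕ) → Irrational (t i)) := by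
  set h : ℝ := (b - a) / (n + 2) with hh_def
  have hn2 : (0:ℝ) < (n:ℝ) + 2 := by positivity
  have hh : 0 < h := div_pos (by linarith) hn2
  set lo : ℕ → ℝ := fun k => a + h * k with lo_def
  have hlo : StrictMono lo := by
    intro i j hij
    simp only [lo_def]
    have : (i:ℝ) < j := by exact_mod_cast hij
    nlinarith
  have H : ∀ i : Fin (n+1), ∃ r : ℝ, r ∈ Ioo (lo i) (lo (i+1)) ∧
      ((Even (i : ℕ) → ¬ Irrational r) ∧ (¬ Even (i : ℕ) → Irrational r)) := by
    intro i
    have hlt : lo i < lo (i+1) := hlo (Nat.lt_succ_self _)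
    by_cases he : Even (i : ℕ)
    · obtain ⟨q, hq1, hq2⟩ := exists_rat_btwn hlt
      exact ⟨q, ⟨hq1, hq2⟩, fun _ => Rat.not_irrational q, fun h' => absurd he h'⟩
    · obtain ⟨r, hr, hr1, hr2⟩ := exists_irrational_btwn hlt
      exact ⟨r, ⟨hr1, hr2⟩, fun h' => absurd h' he, fun _ => hr⟩
  choose t ht1 ht2 using H
  have hmem : ∀ i, t i ∈ Icc a b := by
    intro i
    have h1 := (ht1 i).1
    have h2 := (ht1 i).2
    have hi1 : ((i : ℕ) : ℝ) + 1 ≤ (n : ℝ) + 2 := by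
      have := i.2
      have : ((i:ℕ):ℝ) ≤ n := by exact_mod_cast Nat.lt_succ_iff.mp i.2
      linarith
    constructor
    · have hpos : (0:ℝ) ≤ h * ((i:ℕ):ℝ) := by positivity
      have : a ≤ lo i := by simp only [lo_def]; linarith
      linarith
    · have hb : lo ((i:ℕ)+1) ≤ b := by
        simp only [lo_def]
        push_cast
        have : h * (((i:ℕ):ℝ) + 1) ≤ h * ((n:ℝ) + 2) := by
          apply mul_le_mul_of_nonneg_left hi1 hh.le
        have he : h * ((n:ℝ) + 2) = b - a := by
          rw [hh_def]; exact div_mul_cancel₀ _ hn2.ne'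
        linarith
      linarith
  refine ⟨t, ?_, hmem, fun i => ⟨(ht2 i).1, (ht2 i).2⟩⟩
  rw [Fin.strictMono_iff_lt_succ]
  intro i
  have h1 := (ht1 i.castSucc).2
  have h2 := (ht1 i.succ).1
  have hc : ((i.castSucc : Fin (n+1)) : ℕ) + 1 = ((i.succ : Fin (n+1)) : ℕ) := by
    simp
  calc t i.castSucc < lo ((i.castSucc : ℕ) + 1) := h1
    _ = lo (i.succ : ℕ) := by rw [hc]
    _ < t i.succ := h2

theorem stmt15 {X : Type*} [PseudoMetricSpace X] (x y : X) (hxy : 0 < dist x y)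
    (a b : ℝ) (hab : a < b) (f : ℝ → X)
    (hf : ∀ t : ℝ, (Irrational t → f t = y) ∧ (¬ Irrational t → f t = x)) :
    (∀ ε : ℝ, 0 < ε → ε < dist x y / 2 → appVar ε f (Set.Icc a b) = ⊤) ∧
    (∀ ε : ℝ, dist x y ≤ ε → appVar ε f (Set.Icc a b) = 0) := by
  constructor
  · intro ε hε hε2
    rw [appVar, iInf_eq_top]
    intro g
    rw [iInf_eq_top]
    intro hg
    rw [iInf_eq_top]
    intro hclose
    exfalso
    apply hg.ne
    -- show jordanVar g (Icc a b) = ⊤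
    set c : ℝ := dist x y - 2 * ε with hc_def
    have hc : 0 < c := by simp only [hc_def]; linarith
    apply ENNReal.eq_top_of_forall_nnreal_le
    intro r
    obtain ⟨n, hn⟩ := Archimedean.arch (r : ℝ) hc
    obtain ⟨t, htm, htmem, htalt⟩ := exists_alt a b hab n
    have key : ∀ i : Fin n, ENNReal.ofReal c ≤ edist (g (t i.succ)) (g (t i.castSucc)) := by
      intro i
      rw [edist_dist]
      apply ENNReal.ofReal_le_ofReal
      have hfd : dist (f (t i.succ)) (f (t i.castSucc)) = dist x y := by
        have hs : ((i.succ : Fin (n+1)) : ℕ) = (i : ℕ) + 1 := by simp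
        have hcs : ((i.castSucc : Fin (n+1)) : ℕ) = (i : ℕ) := by simp
        by_cases he : Even (i : ℕ)
        · have h1 : f (t i.castSucc) = x :=
            (hf _).2 ((htalt i.castSucc).1 (by rw [hcs]; exact he))
          have h2 : f (t i.succ) = y :=
            (hf _).1 ((htalt i.succ).2 (by rw [hs, Nat.even_add_one]; exact not_not_intro he))
          rw [h1, h2, dist_comm]
        · have h1 : f (t i.castSucc) = y :=
            (hf _).1 ((htalt i.castSucc).2 (by rw [hcs]; exact he))
          have h2 : f (t i.succ) = x :=
            (hf _).2 ((htalt i.succ).1 (by rw [hs, Nat.even_add_one]; exact he))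
          rw [h1, h2]
      have e1 : dist (f (t i.succ)) (g (t i.succ)) ≤ ε := hclose _ (htmem _)
      have e2 : dist (f (t i.castSucc)) (g (t i.castSucc)) ≤ ε := hclose _ (htmem _)
      have tri : dist (f (t i.succ)) (f (t i.castSucc)) ≤
          dist (f (t i.succ)) (g (t i.succ)) + dist (g (t i.succ)) (g (t i.castSucc)) +
            dist (g (t i.castSucc)) (f (t i.castSucc)) := dist_triangle4 _ _ _ _
      rw [hfd] at tri
      rw [dist_comm (g (t i.castSucc))] at tri
      simp only [hc_def]
      linarith
    have hsum : (n : ENNReal) * ENNReal.ofReal c ≤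
        ∑ i : Fin n, edist (g (t i.succ)) (g (t i.castSucc)) := by
      calc (n : ENNReal) * ENNReal.ofReal c = ∑ _i : Fin n, ENNReal.ofReal c := by
            simp [Finset.sum_const, mul_comm]
        _ ≤ _ := Finset.sum_le_sum fun i _ => key i
    have hle : ∑ i : Fin n, edist (g (t i.succ)) (g (t i.castSucc)) ≤
        jordanVar g (Icc a b) := by
      rw [jordanVar]
      exact le_iSup_of_le n (le_iSup_of_le t (le_iSup_of_le htm.monotone
        (le_iSup_of_le htmem le_rfl)))
    refine le_trans ?_ (hsum.trans hle)
    rw [← ENNReal.ofReal_natCast, ← ENNReal.ofReal_mul (by positivity)]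
    rw [← ENNReal.ofReal_coe_nnreal]
    apply ENNReal.ofReal_le_ofReal
    simpa [nsmul_eq_mul] using hn
  · intro ε hε
    have hconst : jordanVar (fun _ => y) (Icc a b) = 0 := by
      rw [jordanVar]
      simp
    have hle : appVar ε f (Set.Icc a b) ≤ jordanVar (fun _ => y) (Icc a b) := by
      rw [appVar]
      refine le_trans (iInf_le _ (fun _ => y)) ?_
      refine le_trans (iInf_le _ (by rw [hconst]; exact ENNReal.zero_lt_top)) ?_
      refine iInf_le _ ?_
      intro t _
      by_cases h : Irrational t
      · rw [(hf t).1 h]; simpa using hε.trans' (by simp [hxy.le])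
      · rw [(hf t).2 h]; exact hε
    rw [hconst] at hle
    exact le_antisymm hle zero_le
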